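/- Let $1<t<\infty$, $\sigma>0$, $k\in\mathbb{Z}$, and let $\Psi\in\mathcal{S}(\mathbb{R}^d)$ be a Schwartz function with $\Psi_k:=2^{kd}\Psi(2^k\cdot)$. Suppose $f$ is a tempered distribution with $f=\Psi_k * f$ (as functions). Then for all $x,y\in\mathbb{R}^d$, $\frac{|f(x-y)|}{(1+2^k|y|)^{\sigma}}\le \mathfrak{M}_{\sigma,2^k}^{t}f(x)\cdot 2^{-kd/t}\Big(\int_{\mathbb{R}^d}\big(|\Psi_k(z)|(1+2^k|z|)^{\sigma}\big)^{t'}dz\Big)^{1/t'}$, where $1/t+1/t'=1$; in particular $\mathfrak{M}_{\sigma,2^k}f(x)\le C_{\Psi,\sigma,t,d}\,\mathfrak{M}_{\sigma,2^k}^{t}f(x)$ with constant independent of $k$, $f$, and $x$. -/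

import Mathlib

open MeasureTheory ENNReal

noncomputable section

abbrev Euc (d : ℕ) := EuclideanSpace ℝ (Fin d)

/-- Peetre's maximal function `𝔐_{σ,a} f(x) = sup_y |f(x-y)|/(1+a|y|)^σ`. -/
noncomputable def pM (d : ℕ) (σ a : ℝ) (f : Euc d → ℂ) (x : Euc d) : ℝ≥0∞ :=
  ⨆ y : Euc d, (‖f (x - y)‖₊ : ℝ≥0∞) / ENNReal.ofReal ((1 + a * ‖y‖) ^ σ)

/-- The integral variant `𝔐_{σ,a}^t`. -/
noncomputable def pMT (d : ℕ) (σ a t : ℝ) (f : Euc d → ℂ) (x : Euc d) : ℝ≥0∞ :=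
  ENNReal.ofReal (a ^ ((d:ℝ)/t)) *
    (∫⁻ y, (‖f (x - y)‖₊ : ℝ≥0∞) ^ t / ENNReal.ofReal ((1 + a * ‖y‖) ^ (σ * t))) ^ (1/t)

/-- `Ψ_k = 2^{kd} Ψ(2^k ·)`. -/
noncomputable def psiK (d : ℕ) (Ψ : SchwartzMap (Euc d) ℂ) (k : ℤ) (y : Euc d) : ℂ :=
  (((2:ℝ) ^ ((k:ℝ) * d) : ℝ) : ℂ) * Ψ ((2:ℝ)^k • y)

lemma peetre_ineq {a σ : ℝ} (ha : 0 ≤ a) (hσ : 0 ≤ σ) {d : ℕ} (y z : Euc d) :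
    (1 + a * ‖y + z‖) ^ σ ≤ (1 + a * ‖y‖) ^ σ * (1 + a * ‖z‖) ^ σ := by
  rw [← Real.mul_rpow (by positivity) (by positivity)]
  apply Real.rpow_le_rpow (by positivity) ?_ hσ
  have h := norm_add_le y z
  have h1 := norm_nonneg y
  have h2 := norm_nonneg z
  nlinarith [mul_nonneg (mul_nonneg ha h1) (mul_nonneg ha h2)]

lemma schwartz_fin (d : ℕ) {σ t' : ℝ} (hσ : 0 < σ) (ht' : 0 < t')
    (Ψ : SchwartzMap (Euc d) ℂ) :
    ∫⁻ w : Euc d, ENNReal.ofReal ((‖Ψ w‖ * (1 + ‖w‖) ^ σ) ^ t') ≠ ∞ := by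
  obtain ⟨N, hN⟩ := exists_nat_gt ((d : ℝ) / t' + σ)
  set M : ℝ := 2 ^ N * ((Finset.Iic (N, 0)).sup fun m => SchwartzMap.seminorm ℝ m.1 m.2) Ψ with hM
  have hM0 : 0 ≤ M := by positivity
  have key : ∀ w : Euc d, ‖Ψ w‖ ≤ M * (1 + ‖w‖) ^ (-(N:ℝ)) := by
    intro w
    have h := SchwartzMap.one_add_le_sup_seminorm_apply (𝕜 := ℝ) (m := (N, 0)) le_rfl le_rfl Ψ w
    rw [norm_iteratedFDeriv_zero] at h
    have hp : (0:ℝ) < (1 + ‖w‖) ^ (N:ℝ) := by positivity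
    rw [Real.rpow_neg (by positivity), ← div_eq_mul_inv, le_div_iff₀ hp, Real.rpow_natCast]
    linarith [h]
  set r : ℝ := ((N:ℝ) - σ) * t' with hr
  have hdr : (d : ℝ) < r := by
    have h1 : (d : ℝ) / t' < (N:ℝ) - σ := by linarith
    calc (d:ℝ) = (d:ℝ)/t' * t' := by field_simp
    _ < ((N:ℝ) - σ) * t' := by apply mul_lt_mul_of_pos_right h1 ht'
  have hint : Integrable (fun w : Euc d => M ^ t' * (1 + ‖w‖) ^ (-r)) := by
    have := integrable_one_add_norm (E := Euc d) (μ := volume) (r := r)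
      (by rwa [finrank_euclideanSpace_fin])
    exact this.const_mul _
  have hmono : ∀ w : Euc d,
      (‖Ψ w‖ * (1 + ‖w‖) ^ σ) ^ t' ≤ M ^ t' * (1 + ‖w‖) ^ (-r) := by
    intro w
    have hb : (0:ℝ) < 1 + ‖w‖ := by positivity
    have h1 : ‖Ψ w‖ * (1 + ‖w‖) ^ σ ≤ M * (1 + ‖w‖) ^ (σ - (N:ℝ)) := by
      have := key w
      calc ‖Ψ w‖ * (1 + ‖w‖) ^ σ
          ≤ (M * (1 + ‖w‖) ^ (-(N:ℝ))) * (1 + ‖w‖) ^ σ := by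
            apply mul_le_mul_of_nonneg_right this (by positivity)
      _ = M * (1 + ‖w‖) ^ (σ - (N:ℝ)) := by
            rw [mul_assoc, ← Real.rpow_add hb]; ring_nf
    calc (‖Ψ w‖ * (1 + ‖w‖) ^ σ) ^ t'
        ≤ (M * (1 + ‖w‖) ^ (σ - (N:ℝ))) ^ t' := by
          apply Real.rpow_le_rpow (by positivity) h1 ht'.le
    _ = M ^ t' * (1 + ‖w‖) ^ (-r) := by
          rw [Real.mul_rpow hM0 (by positivity), ← Real.rpow_mul hb.le]
          congr 2
          rw [hr]; ring
  apply ne_of_lt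
  calc ∫⁻ w : Euc d, ENNReal.ofReal ((‖Ψ w‖ * (1 + ‖w‖) ^ σ) ^ t')
      ≤ ∫⁻ w : Euc d, ENNReal.ofReal (M ^ t' * (1 + ‖w‖) ^ (-r)) :=
        lintegral_mono fun w => ENNReal.ofReal_le_ofReal (hmono w)
  _ < ∞ := hint.lintegral_lt_top

lemma lint_smul (d : ℕ) (G : Euc d → ℝ≥0∞) {r : ℝ} (hr : r ≠ 0) :
    ∫⁻ z, G (r • z) = ENNReal.ofReal |(r ^ d)⁻¹| * ∫⁻ w, G w := by
  let e : Euc d ≃ᵐ Euc d :=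
    (Homeomorph.smul (isUnit_iff_ne_zero.2 hr).unit).toMeasurableEquiv
  have he : ⇑e = fun z : Euc d => r • z := by
    ext z i
    simp [e, Homeomorph.smul, Units.smul_def]
  have h1 : ∫⁻ z, G (r • z) = ∫⁻ z, G (e z) := by rw [he]
  rw [h1, ← MeasureTheory.lintegral_map_equiv G e]
  have h2 : (volume : Measure (Euc d)).map e = ENNReal.ofReal |(r ^ d)⁻¹| • volume := by
    have := Measure.map_addHaar_smul (volume : Measure (Euc d)) hr
    rw [finrank_euclideanSpace_fin] at this
    rw [he]
    exact this
  rw [h2, lintegral_smul_measure, smul_eq_mul]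

lemma two_ofReal_mul (p q : ℝ) :
    ENNReal.ofReal ((2:ℝ)^p) * ENNReal.ofReal ((2:ℝ)^q) = ENNReal.ofReal ((2:ℝ)^(p+q)) := by
  rw [← ENNReal.ofReal_mul (by positivity), ← Real.rpow_add (by norm_num)]

lemma two_ofReal_rpow (p q : ℝ) :
    (ENNReal.ofReal ((2:ℝ)^p)) ^ q = ENNReal.ofReal ((2:ℝ)^(p*q)) := by
  rw [ENNReal.ofReal_rpow_of_pos (by positivity), ← Real.rpow_mul (by norm_num)]

lemma key1 (d : ℕ) (σ t t' : ℝ) (hσ : 0 < σ) (hpq : Real.HolderConjugate t t')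
    (Ψ : SchwartzMap (Euc d) ℂ) (k : ℤ) (f : Euc d → ℂ)
    (hf : ∀ x, f x = ∫ y, psiK d Ψ k y * f (x - y)) (x y : Euc d) :
    (‖f (x - y)‖₊ : ℝ≥0∞) / ENNReal.ofReal ((1 + (2:ℝ)^k * ‖y‖) ^ σ) ≤
      pMT d σ ((2:ℝ)^k) t f x * ENNReal.ofReal ((2:ℝ) ^ (-((k:ℝ) * d) / t)) *
        (∫⁻ z, ENNReal.ofReal
          ((‖psiK d Ψ k z‖ * (1 + (2:ℝ)^k * ‖z‖) ^ σ) ^ t')) ^ (1/t') := by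
  have ht : 1 < t := hpq.lt
  have ht0 : 0 < t := hpq.pos
  have ht'0 : 0 < t' := hpq.symm.pos
  set a : ℝ := (2:ℝ)^k with ha_def
  have ha : 0 < a := zpow_pos (by norm_num) k
  set W : Euc d → ℝ≥0∞ := fun w => ENNReal.ofReal ((1 + a * ‖w‖) ^ σ) with hW_def
  have hWpos : ∀ w : Euc d, (0:ℝ) < (1 + a * ‖w‖) ^ σ := fun w => by positivity
  have hW0 : ∀ w, W w ≠ 0 := fun w => by
    simp only [hW_def, ne_eq, ENNReal.ofReal_eq_zero, not_le]; exact hWpos w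
  have hWtop : ∀ w, W w ≠ ∞ := fun w => ENNReal.ofReal_ne_top
  set g : Euc d → ℂ := fun z => psiK d Ψ k z * f (x - y - z) with hg_def
  have hfg : f (x - y) = ∫ z, g z := hf (x - y)
  by_cases hgi : Integrable g volume
  case neg =>
    rw [show f (x - y) = 0 by rw [hfg]; exact integral_undef hgi]
    simp
  have hgm : AEMeasurable (fun z => (‖g z‖₊ : ℝ≥0∞)) volume :=
    hgi.aestronglyMeasurable.enorm
  have hΨc : Continuous (fun z : Euc d => psiK d Ψ k z) := by
    exact continuous_const.mul (Ψ.continuous.comp (continuous_const_smul _))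
  have hΨm : Measurable (fun z => (‖psiK d Ψ k z‖₊ : ℝ≥0∞)) := hΨc.measurable.enorm
  have hWc : Continuous W := by
    apply ENNReal.continuous_ofReal.comp
    exact (continuous_const.add (continuous_const.mul continuous_norm)).rpow_const
      (fun w => Or.inr hσ.le)
  have hWm : Measurable W := hWc.measurable
  set A : Euc d → ℝ≥0∞ :=
    fun z => (‖g z‖₊ : ℝ≥0∞) * (‖psiK d Ψ k z‖₊ : ℝ≥0∞)⁻¹ * (W (y + z))⁻¹ with hA_def
  set B : Euc d → ℝ≥0∞ :=
    fun z => (‖psiK d Ψ k z‖₊ : ℝ≥0∞) * W (y + z) * (W y)⁻¹ with hB_def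
  have hWyz : Measurable (fun z : Euc d => W (y + z)) :=
    hWm.comp (measurable_id.const_add y)
  have hA : AEMeasurable A volume :=
    (hgm.mul hΨm.inv.aemeasurable).mul hWyz.inv.aemeasurable
  have hB : AEMeasurable B volume :=
    ((hΨm.mul hWyz).mul_const _).aemeasurable
  have hΨfin : ∀ z, (‖psiK d Ψ k z‖₊ : ℝ≥0∞) ≠ ∞ := fun z => ENNReal.coe_ne_top
  have hAB : ∀ z, (W y)⁻¹ * (‖g z‖₊ : ℝ≥0∞) = A z * B z := by
    intro z
    by_cases hz : psiK d Ψ k z = 0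
    · have : g z = 0 := by simp [hg_def, hz]
      simp [hA_def, this]
    · have hΨ0 : (‖psiK d Ψ k z‖₊ : ℝ≥0∞) ≠ 0 := by
        simpa using hz
      have : A z * B z = ((W y)⁻¹ * (‖g z‖₊ : ℝ≥0∞)) *
          (((‖psiK d Ψ k z‖₊ : ℝ≥0∞) * (‖psiK d Ψ k z‖₊ : ℝ≥0∞)⁻¹) *
           (W (y + z) * (W (y + z))⁻¹)) := by
        simp only [hA_def, hB_def]; ring
      rw [this, ENNReal.mul_inv_cancel hΨ0 (hΨfin z),
        ENNReal.mul_inv_cancel (hW0 _) (hWtop _), mul_one, mul_one]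
  have hAle : ∀ z, A z ≤ (‖f (x - (y + z))‖₊ : ℝ≥0∞) * (W (y + z))⁻¹ := by
    intro z
    apply mul_le_mul_left
    by_cases hz : psiK d Ψ k z = 0
    · have : g z = 0 := by simp [hg_def, hz]
      simp [this]
    · have hΨ0 : (‖psiK d Ψ k z‖₊ : ℝ≥0∞) ≠ 0 := by simpa using hz
      have hgz : (‖g z‖₊ : ℝ≥0∞) = (‖psiK d Ψ k z‖₊ : ℝ≥0∞) * (‖f (x - y - z)‖₊ : ℝ≥0∞) := by
        simp [hg_def, nnnorm_mul]
      rw [hgz, mul_comm _ ((‖f (x - y - z)‖₊ : ℝ≥0∞)), mul_assoc,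
        ENNReal.mul_inv_cancel hΨ0 (hΨfin z), mul_one, sub_sub]
  set F : Euc d → ℝ≥0∞ :=
    fun w => (‖f (x - w)‖₊ : ℝ≥0∞) ^ t / ENNReal.ofReal ((1 + a * ‖w‖) ^ (σ * t)) with hF_def
  have hAt : ∀ z, A z ^ t ≤ F (y + z) := by
    intro z
    refine le_trans (ENNReal.rpow_le_rpow (hAle z) ht0.le) ?_
    rw [ENNReal.mul_rpow_of_nonneg _ _ ht0.le, ENNReal.inv_rpow]
    apply le_of_eq
    simp only [hF_def, div_eq_mul_inv]
    congr 2
    rw [hW_def]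
    rw [ENNReal.ofReal_rpow_of_nonneg (hWpos _).le ht0.le, ← Real.rpow_mul (by positivity)]
  have hintA : ∫⁻ z, A z ^ t ≤ ∫⁻ w, F w := by
    calc ∫⁻ z, A z ^ t ≤ ∫⁻ z, F (y + z) := lintegral_mono hAt
    _ = ∫⁻ w, F w := lintegral_add_left_eq_self F y
  have hBle : ∀ z, B z ^ t' ≤ ENNReal.ofReal
      ((‖psiK d Ψ k z‖ * (1 + a * ‖z‖) ^ σ) ^ t') := by
    intro z
    have h1 : B z ≤ (‖psiK d Ψ k z‖₊ : ℝ≥0∞) * W z := by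
      have hWle : W (y + z) ≤ W y * W z := by
        rw [hW_def]
        simp only
        rw [← ENNReal.ofReal_mul (hWpos y).le]
        exact ENNReal.ofReal_le_ofReal (peetre_ineq ha.le hσ.le y z)
      calc B z ≤ (‖psiK d Ψ k z‖₊ : ℝ≥0∞) * (W y * W z) * (W y)⁻¹ := by
            apply mul_le_mul_left; exact mul_le_mul_right hWle _
      _ = (‖psiK d Ψ k z‖₊ : ℝ≥0∞) * W z * (W y * (W y)⁻¹) := by ring
      _ = (‖psiK d Ψ k z‖₊ : ℝ≥0∞) * W z := by
            rw [ENNReal.mul_inv_cancel (hW0 _) (hWtop _), mul_one]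
    refine le_trans (ENNReal.rpow_le_rpow h1 ht'0.le) (le_of_eq ?_)
    rw [hW_def]
    simp only
    rw [← ENNReal.ofReal_coe_nnreal, coe_nnnorm, ← ENNReal.ofReal_mul (norm_nonneg _),
      ENNReal.ofReal_rpow_of_nonneg (by positivity) ht'0.le]
  have hintB : (∫⁻ z, B z ^ t') ≤ ∫⁻ z, ENNReal.ofReal
      ((‖psiK d Ψ k z‖ * (1 + a * ‖z‖) ^ σ) ^ t') := lintegral_mono hBle
  have step1 : (‖f (x - y)‖₊ : ℝ≥0∞) ≤ ∫⁻ z, (‖g z‖₊ : ℝ≥0∞) := by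
    rw [hfg]; exact enorm_integral_le_lintegral_enorm g
  have hWyinv : (W y)⁻¹ ≠ ∞ := by
    simp [ENNReal.inv_ne_top, hW0 y]
  have main : (‖f (x - y)‖₊ : ℝ≥0∞) / W y ≤
      (∫⁻ w, F w) ^ (1/t) * (∫⁻ z, ENNReal.ofReal
        ((‖psiK d Ψ k z‖ * (1 + a * ‖z‖) ^ σ) ^ t')) ^ (1/t') := by
    calc (‖f (x - y)‖₊ : ℝ≥0∞) / W y ≤ (∫⁻ z, (‖g z‖₊ : ℝ≥0∞)) / W y :=
          ENNReal.div_le_div_right step1 _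
    _ = ∫⁻ z, (W y)⁻¹ * (‖g z‖₊ : ℝ≥0∞) := by
          rw [div_eq_mul_inv, mul_comm, ← lintegral_const_mul' _ _ hWyinv]
    _ = ∫⁻ z, (A * B) z := by
          apply lintegral_congr; intro z; exact hAB z
    _ ≤ (∫⁻ z, A z ^ t) ^ (1/t) * (∫⁻ z, B z ^ t') ^ (1/t') :=
          ENNReal.lintegral_mul_le_Lp_mul_Lq volume hpq hA hB
    _ ≤ (∫⁻ w, F w) ^ (1/t) * (∫⁻ z, ENNReal.ofReal
          ((‖psiK d Ψ k z‖ * (1 + a * ‖z‖) ^ σ) ^ t')) ^ (1/t') := by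
          exact mul_le_mul' (ENNReal.rpow_le_rpow hintA (by positivity))
            (ENNReal.rpow_le_rpow hintB (by positivity))
  have hscalar : ENNReal.ofReal (a ^ ((d:ℝ)/t)) *
      ENNReal.ofReal ((2:ℝ) ^ (-((k:ℝ) * d) / t)) = 1 := by
    have ha2 : a ^ ((d:ℝ)/t) = (2:ℝ) ^ ((k:ℝ) * ((d:ℝ)/t)) := by
      rw [ha_def, ← Real.rpow_intCast (2:ℝ) k, ← Real.rpow_mul (by norm_num)]
    rw [ha2, ← ENNReal.ofReal_mul (by positivity), ← Real.rpow_add (by norm_num : (0:ℝ) < 2)]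
    have h0 : (k:ℝ) * ((d:ℝ)/t) + -((k:ℝ) * (d:ℝ)) / t = 0 := by ring
    rw [h0, Real.rpow_zero, ENNReal.ofReal_one]
  have hpMT : pMT d σ a t f x = ENNReal.ofReal (a ^ ((d:ℝ)/t)) * (∫⁻ w, F w) ^ (1/t) := rfl
  have e1 : ∀ (p q r s : ℝ≥0∞), p * q * r * s = (p * r) * (q * s) := fun p q r s => by ring
  rw [show (‖f (x - y)‖₊ : ℝ≥0∞) / ENNReal.ofReal ((1 + a * ‖y‖) ^ σ)
      = (‖f (x - y)‖₊ : ℝ≥0∞) / W y from rfl,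
    hpMT, e1, hscalar, one_mul]
  exact main

lemma scale_id (d : ℕ) {σ t t' : ℝ} (hσ : 0 < σ) (hpq : Real.HolderConjugate t t')
    (Ψ : SchwartzMap (Euc d) ℂ) (k : ℤ) :
    ENNReal.ofReal ((2:ℝ) ^ (-((k:ℝ) * d) / t)) *
      (∫⁻ z, ENNReal.ofReal
        ((‖psiK d Ψ k z‖ * (1 + (2:ℝ)^k * ‖z‖) ^ σ) ^ t')) ^ (1/t') =
    (∫⁻ w : Euc d, ENNReal.ofReal ((‖Ψ w‖ * (1 + ‖w‖) ^ σ) ^ t')) ^ (1/t') := by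
  have ht'0 : 0 < t' := hpq.symm.pos
  set a : ℝ := (2:ℝ)^k with ha_def
  have ha : 0 < a := zpow_pos (by norm_num) k
  have ha2 : a = (2:ℝ) ^ ((k:ℝ)) := by rw [ha_def, Real.rpow_intCast]
  set J' : ℝ≥0∞ := ∫⁻ w : Euc d, ENNReal.ofReal ((‖Ψ w‖ * (1 + ‖w‖) ^ σ) ^ t')
    with hJ'
  set G : Euc d → ℝ≥0∞ :=
    fun w => ENNReal.ofReal (((2:ℝ)^((k:ℝ)*d) * (‖Ψ w‖ * (1+‖w‖)^σ))^t') with hG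
  have h1 : ∀ z : Euc d, ENNReal.ofReal
      ((‖psiK d Ψ k z‖ * (1 + a * ‖z‖) ^ σ) ^ t') = G (a • z) := by
    intro z
    have hnorm : ‖a • z‖ = a * ‖z‖ := by
      rw [norm_smul, Real.norm_eq_abs, abs_of_pos ha]
    have habs : ‖psiK d Ψ k z‖ = (2:ℝ)^((k:ℝ)*d) * ‖Ψ (a • z)‖ := by
      rw [psiK]
      rw [norm_mul, Complex.norm_real, Real.norm_eq_abs, abs_of_pos (by positivity)]
    simp only [hG, hnorm, habs]
    ring_nf
  have h2 : ∫⁻ z, G (a • z) = ENNReal.ofReal |(a^d)⁻¹| * ∫⁻ w, G w := lint_smul d G ha.ne'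
  have h3 : ∫⁻ w, G w = ENNReal.ofReal (((2:ℝ)^((k:ℝ)*d))^t') * J' := by
    rw [hJ', ← lintegral_const_mul' _ _ ENNReal.ofReal_ne_top]
    apply lintegral_congr
    intro w
    rw [← ENNReal.ofReal_mul (by positivity), ← Real.mul_rpow (by positivity) (by positivity)]
  have habs2 : |(a^d)⁻¹| = (2:ℝ) ^ (-((k:ℝ)*d)) := by
    have had : a ^ d = (2:ℝ) ^ ((k:ℝ) * d) := by
      rw [ha2, ← Real.rpow_natCast ((2:ℝ)^((k:ℝ))) d, ← Real.rpow_mul (by norm_num)]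
    rw [had, abs_of_pos (by positivity), ← Real.rpow_neg (by norm_num)]
  have hpow2 : ((2:ℝ)^((k:ℝ)*d))^t' = (2:ℝ) ^ (((k:ℝ)*d)*t') := by
    rw [← Real.rpow_mul (by norm_num)]
  calc ENNReal.ofReal ((2:ℝ) ^ (-((k:ℝ) * d) / t)) *
      (∫⁻ z, ENNReal.ofReal ((‖psiK d Ψ k z‖ * (1 + a * ‖z‖) ^ σ) ^ t')) ^ (1/t')
      = ENNReal.ofReal ((2:ℝ) ^ (-((k:ℝ) * d) / t)) *
        (ENNReal.ofReal ((2:ℝ) ^ (-((k:ℝ)*d))) *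
          (ENNReal.ofReal ((2:ℝ) ^ (((k:ℝ)*d)*t')) * J')) ^ (1/t') := by
        rw [show (∫⁻ z, ENNReal.ofReal ((‖psiK d Ψ k z‖ * (1 + a * ‖z‖) ^ σ) ^ t'))
            = ∫⁻ z, G (a • z) from lintegral_congr h1, h2, h3, habs2, hpow2]
  _ = ENNReal.ofReal ((2:ℝ) ^ (-((k:ℝ) * d) / t)) *
        (ENNReal.ofReal ((2:ℝ) ^ (-((k:ℝ)*d) * (1/t'))) *
          (ENNReal.ofReal ((2:ℝ) ^ ((((k:ℝ)*d)*t') * (1/t'))) * J' ^ (1/t'))) := by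
        rw [ENNReal.mul_rpow_of_nonneg _ _ (by positivity),
          ENNReal.mul_rpow_of_nonneg _ _ (by positivity), two_ofReal_rpow, two_ofReal_rpow,
          mul_assoc]
  _ = ENNReal.ofReal ((2:ℝ) ^ (-((k:ℝ) * d) / t +
        (-((k:ℝ)*d) * (1/t') + (((k:ℝ)*d)*t') * (1/t')))) * J' ^ (1/t') := by
        rw [← two_ofReal_mul, ← two_ofReal_mul]
        ring
  _ = J' ^ (1/t') := by
        have hE : -((k:ℝ) * d) / t + (-((k:ℝ)*d) * (1/t') + (((k:ℝ)*d)*t') * (1/t')) = 0 := by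
          have hth : 1/t + 1/t' = 1 := by
            simpa [one_div] using hpq.inv_add_inv_eq_one
          have htne : t ≠ 0 := hpq.pos.ne'
          have ht'ne : t' ≠ 0 := ht'0.ne'
          field_simp
          field_simp at hth
          linear_combination (-((k:ℝ) * (d:ℝ))) * hth
        rw [hE, Real.rpow_zero, ENNReal.ofReal_one, one_mul]

theorem stmt8 (d : ℕ) (hd : 0 < d) (σ t t' : ℝ) (ht : 1 < t) (hσ : 0 < σ)
    (ht' : 1/t + 1/t' = 1) (Ψ : SchwartzMap (Euc d) ℂ) :
    (∀ (k : ℤ) (f : Euc d → ℂ), (∀ x, f x = ∫ y, psiK d Ψ k y * f (x - y)) →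
      ∀ x y : Euc d,
        (‖f (x - y)‖₊ : ℝ≥0∞) / ENNReal.ofReal ((1 + (2:ℝ)^k * ‖y‖) ^ σ) ≤
          pMT d σ ((2:ℝ)^k) t f x * ENNReal.ofReal ((2:ℝ) ^ (-((k:ℝ) * d) / t)) *
            (∫⁻ z, ENNReal.ofReal
              ((‖psiK d Ψ k z‖ * (1 + (2:ℝ)^k * ‖z‖) ^ σ) ^ t')) ^ (1/t')) ∧
    ∃ C : ℝ≥0∞, C ≠ ∞ ∧ ∀ (k : ℤ) (f : Euc d → ℂ),
      (∀ x, f x = ∫ y, psiK d Ψ k y * f (x - y)) →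
      ∀ x : Euc d, pM d σ ((2:ℝ)^k) f x ≤ C * pMT d σ ((2:ℝ)^k) t f x := by
  have hpq : Real.HolderConjugate t t' := Real.holderConjugate_iff.2 ⟨ht, by simpa [one_div] using ht'⟩
  have ht'0 : 0 < t' := hpq.symm.pos
  constructor
  · intro k f hf x y
    exact key1 d σ t t' hσ hpq Ψ k f hf x y
  · refine ⟨(∫⁻ w : Euc d, ENNReal.ofReal ((‖Ψ w‖ * (1 + ‖w‖) ^ σ) ^ t')) ^ (1/t'),
      ?_, ?_⟩
    · exact ENNReal.rpow_ne_top_of_nonneg (by positivity) (schwartz_fin d hσ ht'0 Ψ)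
    · intro k f hf x
      rw [pM]
      apply iSup_le
      intro y
      calc (‖f (x - y)‖₊ : ℝ≥0∞) / ENNReal.ofReal ((1 + (2:ℝ)^k * ‖y‖) ^ σ)
          ≤ pMT d σ ((2:ℝ)^k) t f x * ENNReal.ofReal ((2:ℝ) ^ (-((k:ℝ) * d) / t)) *
            (∫⁻ z, ENNReal.ofReal
              ((‖psiK d Ψ k z‖ * (1 + (2:ℝ)^k * ‖z‖) ^ σ) ^ t')) ^ (1/t') :=
            key1 d σ t t' hσ hpq Ψ k f hf x y
      _ = (ENNReal.ofReal ((2:ℝ) ^ (-((k:ℝ) * d) / t)) *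
            (∫⁻ z, ENNReal.ofReal
              ((‖psiK d Ψ k z‖ * (1 + (2:ℝ)^k * ‖z‖) ^ σ) ^ t')) ^ (1/t')) *
            pMT d σ ((2:ℝ)^k) t f x := by ring
      _ = (∫⁻ w : Euc d, ENNReal.ofReal ((‖Ψ w‖ * (1 + ‖w‖) ^ σ) ^ t')) ^ (1/t') *
            pMT d σ ((2:ℝ)^k) t f x := by rw [scale_id d hσ hpq Ψ k]
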